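/- In the additive setting below, let x₀ ∈ Ch(𝒜), y₀ ∈ Ch(ℬ) and s > 0. Then: (i) x₀ ∈ I¹_{y₀} if and only if y₀ ∈ J^s_{x₀}; (ii) y₀ ∈ J¹_{x₀} if and only if x₀ ∈ I^s_{y₀}. -/

import Mathlib

open scoped ZeroAtInfty Pointwise
open Filter Topology

set_option maxHeartbeats 1000000
set_option synthInstance.maxHeartbeats 1000000

/-- The (inc) property for a two-variable function `φ : ℂ → ℂ → ℝ`. -/
def IncProp (φ : ℂ → ℂ → ℝ) : Prop :=
  (∀ s₁ s₂ t : ℂ, ‖s₁‖ ≤ ‖s₂‖ →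
      φ s₁ t ≤ φ s₂ t ∧ φ t s₁ ≤ φ t s₂) ∧
  (∀ s₁ s₂ t : ℂ, ‖s₁‖ < ‖s₂‖ → t ≠ 0 →
      φ s₁ t < φ s₂ t ∧ φ t s₁ < φ t s₂)

/-- The (con) property. -/
def ConProp (φ : ℂ → ℂ → ℝ) : Prop :=
  ∀ (n : ℕ), 0 < n → ∀ (s : Fin n → ℂ) (t : ℂ),
    φ ((1 / (n : ℂ)) * ∑ i, s i) t ≤ (1 / (n : ℝ)) * ∑ i, φ (s i) t ∧
    φ t ((1 / (n : ℂ)) * ∑ i, s i) ≤ (1 / (n : ℝ)) * ∑ i, φ t (s i)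

/-- sup of φ(f,g) over the space (the supremum norm of the nonnegative function φ(f,g)). -/
noncomputable def supPhi {X : Type*} (φ : ℂ → ℂ → ℝ) (f g : X → ℂ) : ℝ :=
  ⨆ x, φ (f x) (g x)

noncomputable def rhoPlus {X : Type*} (φ : ℂ → ℂ → ℝ) (f g : X → ℂ) : ℝ :=
  supPhi φ f g + supPhi φ g f

noncomputable def rhoMax {X : Type*} (φ : ℂ → ℂ → ℝ) (f g : X → ℂ) : ℝ :=
  max (supPhi φ f g) (supPhi φ g f)

noncomputable def rhoPlusScalar (φ : ℂ → ℂ → ℝ) (r s : ℂ) : ℝ := φ r s + φ s r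

noncomputable def rhoMaxScalar (φ : ℂ → ℂ → ℝ) (r s : ℂ) : ℝ := max (φ r s) (φ s r)

/-- Generic ρ, with a Boolean selecting between ρ₊ (true) and ρ_max (false). -/
noncomputable def rhoGen {X : Type*} (c : Bool) (φ : ℂ → ℂ → ℝ) (f g : X → ℂ) : ℝ :=
  if c then rhoPlus φ f g else rhoMax φ f g

noncomputable def rhoGenScalar (c : Bool) (φ : ℂ → ℂ → ℝ) (r s : ℂ) : ℝ :=
  if c then rhoPlusScalar φ r s else rhoMaxScalar φ r s

/-- `x₀` is a strong boundary point of `A ⊆ C₀(X)`. -/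
def IsStrongBoundaryPoint {X : Type*} [TopologicalSpace X]
    (A : Set C₀(X, ℂ)) (x₀ : X) : Prop :=
  ∀ ε > (0 : ℝ), ∀ V ∈ 𝓝 x₀, ∃ f ∈ A, f x₀ = 1 ∧ ‖f‖ = 1 ∧
    ∀ x ∉ V, ‖f x‖ < ε

/-- V_{x₀}(A). -/
def Vset {X : Type*} [TopologicalSpace X] (A : Set C₀(X, ℂ)) (x₀ : X) : Set C₀(X, ℂ) :=
  {f ∈ A | f x₀ = 1 ∧ ‖f‖ = 1}

/-- F_{x₀}(A). -/
def Fset {X : Type*} [TopologicalSpace X] (A : Set C₀(X, ℂ)) (x₀ : X) : Set C₀(X, ℂ) :=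
  {f ∈ A | ‖f x₀‖ = 1 ∧ ‖f‖ = 1}

/-- The maximum modulus set M(f). -/
def maxSet {X : Type*} [TopologicalSpace X] (f : C₀(X, ℂ)) : Set X :=
  {x | ‖f x‖ = ‖f‖}

noncomputable instance instNACGzeroInftyC {X : Type*} [TopologicalSpace X] : NormedAddCommGroup C₀(X, ℂ) :=
  ZeroAtInftyContinuousMap.instNormedAddCommGroup

/-- Evaluation at a point, as a continuous linear functional on a subspace of C₀(X). -/
noncomputable def evalDual {X : Type*} [TopologicalSpace X]
    (𝒜 : Submodule ℂ C₀(X, ℂ)) (x : X) : StrongDual ℂ 𝒜 :=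
  LinearMap.mkContinuous
    { toFun := fun f => (f : C₀(X, ℂ)) x
      map_add' := fun f g => rfl
      map_smul' := fun c f => rfl }
    1
    (fun f => by
      rw [one_mul, ← Submodule.norm_coe]
      exact ((f : C₀(X, ℂ)).toBCF.norm_coe_le_norm x).trans_eq
        ZeroAtInftyContinuousMap.norm_toBCF_eq_norm)

/-- `x` lies in the Choquet boundary of a subspace `𝒜` of `C₀(X)`: the evaluation functional is
an extreme point of the closed unit ball of the dual space. -/
def InChoquetBoundary {X : Type*} [TopologicalSpace X]
    (𝒜 : Submodule ℂ C₀(X, ℂ)) (x : X) : Prop :=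
  evalDual 𝒜 x ∈
    Set.extremePoints ℝ (Metric.closedBall (0 : StrongDual ℂ 𝒜) 1)

/-- A function algebra on `X`: a closed subalgebra of `C₀(X)` strongly separating points. -/
def IsFunctionAlgebra {X : Type*} [TopologicalSpace X]
    (𝒜 : NonUnitalSubalgebra ℂ C₀(X, ℂ)) : Prop :=
  IsClosed (𝒜 : Set C₀(X, ℂ)) ∧
  (∀ x y : X, x ≠ y → ∃ f ∈ 𝒜, f x ≠ f y) ∧
  (∀ x : X, ∃ g ∈ 𝒜, g x ≠ (0 : ℂ))

/-- `|A| ⊆ |𝒜|`. -/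
def ModulusSubset {X : Type*} [TopologicalSpace X]
    (A 𝒜 : Set C₀(X, ℂ)) : Prop :=
  ∀ f ∈ A, ∃ g ∈ 𝒜, ∀ x, ‖f x‖ = ‖g x‖

/-- The positive elements of a subset `S` of `C₀(X)`. -/
def posPartSet {X : Type*} [TopologicalSpace X] (S : Set C₀(X, ℂ)) : Set C₀(X, ℂ) :=
  {f ∈ S | ∀ x, ∃ r : ℝ, 0 ≤ r ∧ f x = r}

section Helpers

variable {φ : ℂ → ℂ → ℝ}

lemma phi_mono (hinc : IncProp φ) {a a' b b' : ℂ}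
    (h1 : ‖a‖ ≤ ‖a'‖) (h2 : ‖b‖ ≤ ‖b'‖) :
    φ a b ≤ φ a' b' :=
  ((hinc.1 a a' b h1).1).trans ((hinc.1 b b' a' h2).2)

lemma phi_congr (hinc : IncProp φ) {a a' b b' : ℂ}
    (h1 : ‖a‖ = ‖a'‖) (h2 : ‖b‖ = ‖b'‖) :
    φ a b = φ a' b' :=
  le_antisymm (phi_mono hinc h1.le h2.le) (phi_mono hinc h1.ge h2.ge)

lemma phi_diag_lt (hinc : IncProp φ) {u v : ℝ} (hu : 0 ≤ u) (huv : u < v) :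
    φ (u : ℂ) u < φ (v : ℂ) v := by
  have hv : (0:ℝ) < v := hu.trans_lt huv
  have h1 : ‖(u:ℂ)‖ < ‖(v:ℂ)‖ := by
    rwa [Complex.norm_real, Real.norm_eq_abs, Complex.norm_real, Real.norm_eq_abs, abs_of_nonneg hu, abs_of_pos hv]
  have h2 : ((v:ℂ)) ≠ 0 := by exact_mod_cast hv.ne'
  calc φ (u:ℂ) u ≤ φ (v:ℂ) u := (hinc.1 _ _ _ h1.le).1
    _ < φ (v:ℂ) v := (hinc.2 (u:ℂ) (v:ℂ) (v:ℂ) h1 h2).2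

lemma abs_apply_le_norm {X : Type*} [TopologicalSpace X] (f : C₀(X, ℂ)) (x : X) :
    ‖f x‖ ≤ ‖f‖ := by
  rw [← ZeroAtInftyContinuousMap.norm_toBCF_eq_norm]
  exact f.toBCF.norm_coe_le_norm x

lemma exists_abs_eq_norm {X : Type*} [TopologicalSpace X] [Nonempty X] (f : C₀(X, ℂ)) :
    ∃ x, ‖f x‖ = ‖f‖ := by
  rcases eq_or_lt_of_le (norm_nonneg f) with h0 | h0
  · inhabit X
    refine ⟨default, le_antisymm (abs_apply_le_norm f default) ?_⟩
    rw [← h0]; exact norm_nonneg _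
  · have hcont : Continuous fun x => ‖f x‖ :=
      continuous_norm.comp (map_continuous f)
    obtain ⟨x₀, hx₀⟩ : ∃ x₀, ‖f‖ / 2 < ‖f x₀‖ := by
      by_contra hc
      push_neg at hc
      have : ‖f‖ ≤ ‖f‖ / 2 := by
        rw [← ZeroAtInftyContinuousMap.norm_toBCF_eq_norm]
        refine (BoundedContinuousFunction.norm_le (by positivity)).2 fun x => ?_
        exact hc x
      linarith
    have htend : Tendsto (fun x => ‖f x‖) (cocompact X) (𝓝 0) := by
      have := ZeroAtInftyContinuousMapClass.zero_at_infty f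
      simpa using this.norm
    have hev : ∀ᶠ x in cocompact X, ‖f x‖ ≤ ‖f x₀‖ := by
      filter_upwards [htend.eventually_lt_const (by linarith : (0:ℝ) < ‖f‖ / 2)] with x hx
      exact (hx.trans hx₀).le
    obtain ⟨x, hx⟩ := hcont.exists_forall_ge' x₀ hev
    refine ⟨x, le_antisymm (abs_apply_le_norm f x) ?_⟩
    rw [← ZeroAtInftyContinuousMap.norm_toBCF_eq_norm]
    refine (BoundedContinuousFunction.norm_le (norm_nonneg _)).2 fun y => ?_
    exact hx y

lemma le_supPhi {Z : Type*} [Nonempty Z] {F G : Z → ℂ} {C : ℝ}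
    (hC : ∀ z, φ (F z) (G z) ≤ C) (z₀ : Z) : φ (F z₀) (G z₀) ≤ supPhi φ F G :=
  le_ciSup ⟨C, by rintro _ ⟨z, rfl⟩; exact hC z⟩ z₀

lemma supPhi_eq (hinc : IncProp φ) {Z : Type*} [Nonempty Z] {F G : Z → ℂ} {a b : ℝ} (z₀ : Z)
    (hFa : ∀ z, ‖F z‖ ≤ a) (hGb : ∀ z, ‖G z‖ ≤ b)
    (h1 : ‖F z₀‖ = a) (h2 : ‖G z₀‖ = b) :
    supPhi φ F G = φ (a : ℂ) (b : ℂ) := by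
  have ha : 0 ≤ a := h1 ▸ norm_nonneg _
  have hb : 0 ≤ b := h2 ▸ norm_nonneg _
  have hca : ‖(a:ℂ)‖ = a := by rw [Complex.norm_real, Real.norm_eq_abs, abs_of_nonneg ha]
  have hcb : ‖(b:ℂ)‖ = b := by rw [Complex.norm_real, Real.norm_eq_abs, abs_of_nonneg hb]
  have hbound : ∀ z, φ (F z) (G z) ≤ φ (a:ℂ) (b:ℂ) := fun z =>
    phi_mono hinc (by rw [hca]; exact hFa z) (by rw [hcb]; exact hGb z)
  refine le_antisymm (ciSup_le hbound) ?_
  have := le_supPhi hbound z₀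
  calc φ (a:ℂ) (b:ℂ) = φ (F z₀) (G z₀) :=
        phi_congr hinc (by rw [hca, h1]) (by rw [hcb, h2])
    _ ≤ supPhi φ F G := this

lemma supPhi_lt (hinc : IncProp φ) {Z : Type*} [Nonempty Z] {F G : Z → ℂ} {a b δ : ℝ}
    (V : Set Z) (ha : 0 < a) (hb : 0 < b) (hδ : 0 < δ) (hδa : δ ≤ a)
    (hFa : ∀ z, ‖F z‖ ≤ a) (hGb : ∀ z, ‖G z‖ ≤ b)
    (hFV : ∀ z ∈ V, ‖F z‖ ≤ a - δ)
    (hGV : ∀ z ∉ V, ‖G z‖ ≤ b / 2) :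
    supPhi φ F G < φ (a:ℂ) (b:ℂ) ∧ supPhi φ G F < φ (b:ℂ) (a:ℂ) := by
  have hca : ‖(a:ℂ)‖ = a := by rw [Complex.norm_real, Real.norm_eq_abs, abs_of_pos ha]
  have hcb : ‖(b:ℂ)‖ = b := by rw [Complex.norm_real, Real.norm_eq_abs, abs_of_pos hb]
  have hcaδ : ‖(↑(a - δ) : ℂ)‖ = a - δ := by
    rw [Complex.norm_real, Real.norm_eq_abs, abs_of_nonneg (by linarith)]
  have hcb2 : ‖(↑(b / 2) : ℂ)‖ = b / 2 := by
    rw [Complex.norm_real, Real.norm_eq_abs, abs_of_nonneg (by linarith)]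
  have hane : ((a:ℂ)) ≠ 0 := by exact_mod_cast ha.ne'
  have hbne : ((b:ℂ)) ≠ 0 := by exact_mod_cast hb.ne'
  have haδ : ‖(↑(a - δ):ℂ)‖ < ‖(a:ℂ)‖ := by
    rw [hca, hcaδ]; linarith
  have hb2 : ‖(↑(b / 2):ℂ)‖ < ‖(b:ℂ)‖ := by
    rw [hcb, hcb2]; linarith
  constructor
  · have hub : ∀ z, φ (F z) (G z) ≤ max (φ (↑(a - δ)) (b:ℂ)) (φ (a:ℂ) (↑(b / 2))) := by
      intro z
      by_cases hz : z ∈ V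
      · exact le_max_of_le_left
          (phi_mono hinc (by rw [hcaδ]; exact hFV z hz) (by rw [hcb]; exact hGb z))
      · exact le_max_of_le_right
          (phi_mono hinc (by rw [hca]; exact hFa z) (by rw [hcb2]; exact hGV z hz))
    refine (ciSup_le hub).trans_lt (max_lt ?_ ?_)
    · exact (hinc.2 _ _ _ haδ hbne).1
    · exact (hinc.2 _ _ _ hb2 hane).2
  · have hub : ∀ z, φ (G z) (F z) ≤ max (φ (b:ℂ) (↑(a - δ))) (φ (↑(b / 2)) (a:ℂ)) := by
      intro z
      by_cases hz : z ∈ V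
      · exact le_max_of_le_left
          (phi_mono hinc (by rw [hcb]; exact hGb z) (by rw [hcaδ]; exact hFV z hz))
      · exact le_max_of_le_right
          (phi_mono hinc (by rw [hcb2]; exact hGV z hz) (by rw [hca]; exact hFa z))
    refine (ciSup_le hub).trans_lt (max_lt ?_ ?_)
    · exact (hinc.2 _ _ _ haδ hbne).2
    · exact (hinc.2 _ _ _ hb2 hane).1

lemma norm_smul_c0 {X : Type*} [TopologicalSpace X] (t : ℂ) (k : C₀(X, ℂ)) :
    ‖t • k‖ = ‖t‖ * ‖k‖ :=
  norm_smul (α := ℂ) (β := C₀(X, ℂ)) t k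

end Helpers

theorem stmt10 {X Y : Type*} [TopologicalSpace X] [LocallyCompactSpace X] [T2Space X] [TopologicalSpace Y] [LocallyCompactSpace Y] [T2Space Y]
    (φ : ℂ → ℂ → ℝ) (hφc : Continuous fun p : ℂ × ℂ => φ p.1 p.2)
    (hφ0 : ∀ s t : ℂ, 0 ≤ φ s t) (hinc : IncProp φ) (hcon : ConProp φ)
    (A : Set C₀(X, ℂ)) (B : Set C₀(Y, ℂ))
    (hA : (∃ S : Submodule ℂ C₀(X, ℂ), A = (S : Set C₀(X, ℂ))) ∨
          (∃ S : Submodule ℂ C₀(X, ℂ), A = posPartSet (S : Set C₀(X, ℂ))))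
    (hB : (∃ S : Submodule ℂ C₀(Y, ℂ), B = (S : Set C₀(Y, ℂ))) ∨
          (∃ S : Submodule ℂ C₀(Y, ℂ), B = posPartSet (S : Set C₀(Y, ℂ))))
    (𝒜 : NonUnitalSubalgebra ℂ C₀(X, ℂ)) (ℬ : NonUnitalSubalgebra ℂ C₀(Y, ℂ))
    (h𝒜 : IsFunctionAlgebra 𝒜) (hℬ : IsFunctionAlgebra ℬ)
    (hbd𝒜 : ∀ x : X, IsStrongBoundaryPoint A x ↔ InChoquetBoundary 𝒜.toSubmodule x)
    (hbdℬ : ∀ y : Y, IsStrongBoundaryPoint B y ↔ InChoquetBoundary ℬ.toSubmodule y)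
    (hmodA : ModulusSubset A (𝒜 : Set C₀(X, ℂ)))
    (hmodB : ModulusSubset B (ℬ : Set C₀(Y, ℂ)))
    (T : C₀(X, ℂ) → C₀(Y, ℂ)) (hTmaps : Set.MapsTo T A B) (hTsurj : Set.SurjOn T A B)
    (c : Bool)
    (hT : ∀ f ∈ A, ∀ g ∈ A,
      rhoGen c φ (fun y => T f y) (fun y => T g y) =
        rhoGen c φ (fun x => f x) (fun x => g x))
    (x₀ : X) (hx₀ : InChoquetBoundary 𝒜.toSubmodule x₀)
    (y₀ : Y) (hy₀ : InChoquetBoundary ℬ.toSubmodule y₀)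
    (s : ℝ) (hs : 0 < s) :
    (x₀ ∈ (⋂ f ∈ {f : C₀(X, ℂ) | f ∈ A ∧ T f ∈ (1 : ℂ) • Vset B y₀}, maxSet f) ↔ y₀ ∈ (⋂ f ∈ (s : ℂ) • Vset A x₀, maxSet (T f))) ∧
    (y₀ ∈ (⋂ f ∈ (1 : ℂ) • Vset A x₀, maxSet (T f)) ↔ x₀ ∈ (⋂ f ∈ {f : C₀(X, ℂ) | f ∈ A ∧ T f ∈ (s : ℂ) • Vset B y₀}, maxSet f)) := by
  
  haveI : Nonempty X := ⟨x₀⟩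
  haveI : Nonempty Y := ⟨y₀⟩
  -- closure of A and B under nonnegative real scalar multiplication
  have hAsmul : ∀ (r : ℝ), 0 ≤ r → ∀ f ∈ A, (r : ℂ) • f ∈ A := by
    intro r hr f hf
    rcases hA with ⟨S, rfl⟩ | ⟨S, rfl⟩
    · exact S.smul_mem _ hf
    · obtain ⟨hfS, hfpos⟩ := hf
      refine ⟨S.smul_mem _ hfS, fun x => ?_⟩
      obtain ⟨ρ, hρ, he⟩ := hfpos x
      refine ⟨r * ρ, mul_nonneg hr hρ, ?_⟩
      rw [ZeroAtInftyContinuousMap.smul_apply, he, smul_eq_mul]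
      push_cast
      ring
  have hBsmul : ∀ (r : ℝ), 0 ≤ r → ∀ f ∈ B, (r : ℂ) • f ∈ B := by
    intro r hr f hf
    rcases hB with ⟨S, rfl⟩ | ⟨S, rfl⟩
    · exact S.smul_mem _ hf
    · obtain ⟨hfS, hfpos⟩ := hf
      refine ⟨S.smul_mem _ hfS, fun x => ?_⟩
      obtain ⟨ρ, hρ, he⟩ := hfpos x
      refine ⟨r * ρ, mul_nonneg hr hρ, ?_⟩
      rw [ZeroAtInftyContinuousMap.smul_apply, he, smul_eq_mul]
      push_cast
      ring
  -- T preserves norms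
  have hnorm : ∀ f ∈ A, ‖T f‖ = ‖f‖ := by
    intro f hf
    have hE := hT f hf f hf
    obtain ⟨xs, hxs⟩ := exists_abs_eq_norm f
    obtain ⟨ys, hys⟩ := exists_abs_eq_norm (T f)
    have e1 : supPhi φ (fun x => f x) (fun x => f x) = φ ((‖f‖ : ℂ)) ((‖f‖ : ℂ)) :=
      supPhi_eq hinc xs (fun x => abs_apply_le_norm f x) (fun x => abs_apply_le_norm f x) hxs hxs
    have e2 : supPhi φ (fun y => T f y) (fun y => T f y) = φ ((‖T f‖ : ℂ)) ((‖T f‖ : ℂ)) :=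
      supPhi_eq hinc ys (fun y => abs_apply_le_norm (T f) y) (fun y => abs_apply_le_norm (T f) y)
        hys hys
    have hval : φ ((‖T f‖ : ℂ)) ((‖T f‖ : ℂ)) = φ ((‖f‖ : ℂ)) ((‖f‖ : ℂ)) := by
      cases c with
      | false =>
        have hE' : max (supPhi φ (fun y => T f y) (fun y => T f y))
            (supPhi φ (fun y => T f y) (fun y => T f y)) =
            max (supPhi φ (fun x => f x) (fun x => f x))
            (supPhi φ (fun x => f x) (fun x => f x)) := hE
        rw [e1, e2, max_self, max_self] at hE'
        exact hE'
      | true =>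
        have hE' : supPhi φ (fun y => T f y) (fun y => T f y) +
            supPhi φ (fun y => T f y) (fun y => T f y) =
            supPhi φ (fun x => f x) (fun x => f x) +
            supPhi φ (fun x => f x) (fun x => f x) := hE
        rw [e1, e2] at hE'
        linarith
    rcases lt_trichotomy ‖T f‖ ‖f‖ with h | h | h
    · exact absurd hval (ne_of_lt (phi_diag_lt hinc (norm_nonneg _) h))
    · exact h
    · exact absurd hval (ne_of_gt (phi_diag_lt hinc (norm_nonneg _) h))
  -- the key general claim
  have key : ∀ r t : ℝ, 0 < r → 0 < t →
      ((x₀ ∈ ⋂ f ∈ {f : C₀(X, ℂ) | f ∈ A ∧ T f ∈ ((r : ℂ)) • Vset B y₀}, maxSet f) ↔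
        (y₀ ∈ ⋂ f ∈ ((t : ℂ)) • Vset A x₀, maxSet (T f))) := by
    intro r t hr ht
    constructor
    · -- forward direction
      intro HI
      rw [Set.mem_iInter₂] at HI
      rw [Set.mem_iInter₂]
      intro h' hh'
      rw [Set.mem_smul_set] at hh'
      obtain ⟨k, hk, rfl⟩ := hh'
      obtain ⟨hkA, hk1, hknorm⟩ := hk
      set h : C₀(X, ℂ) := (↑t : ℂ) • k with hhdef
      have hhA : h ∈ A := hAsmul t ht.le k hkA
      have hhnorm : ‖h‖ = t := by
        rw [hhdef, norm_smul_c0, hknorm]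
        simp [Complex.norm_real, Real.norm_eq_abs, abs_of_pos ht]
      have hThnorm : ‖T h‖ = t := by rw [hnorm h hhA, hhnorm]
      show ‖T h y₀‖ = ‖T h‖
      rw [hThnorm]
      by_contra hne
      have hlt : ‖T h y₀‖ < t :=
        lt_of_le_of_ne (hThnorm ▸ abs_apply_le_norm (T h) y₀) hne
      set δ := (t - ‖T h y₀‖) / 2 with hδdef
      have hδ : 0 < δ := by rw [hδdef]; linarith
      have hδt : δ ≤ t := by
        have := norm_nonneg (T h y₀)
        rw [hδdef]; linarith
      set V := {y | ‖T h y‖ < t - δ} with hVdef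
      have hVo : IsOpen V :=
        isOpen_lt (continuous_norm.comp (map_continuous (T h))) continuous_const
      have hy₀V : y₀ ∈ V := by
        rw [hVdef]
        simp only [Set.mem_setOf_eq]
        rw [hδdef]; linarith
      obtain ⟨u, huB, huy₀, hunorm, husm⟩ :=
        (hbdℬ y₀).mpr hy₀ (1/2) (by norm_num) V (hVo.mem_nhds hy₀V)
      have hwB : (r : ℂ) • u ∈ B := hBsmul r hr.le u huB
      obtain ⟨g, hgA, hTg⟩ := hTsurj hwB
      have hgmem : g ∈ {f : C₀(X, ℂ) | f ∈ A ∧ T f ∈ ((r : ℂ)) • Vset B y₀} :=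
        ⟨hgA, Set.mem_smul_set.mpr ⟨u, ⟨huB, huy₀, hunorm⟩, hTg.symm⟩⟩
      have hgmax : ‖g x₀‖ = ‖g‖ := HI g hgmem
      have hTgnorm : ‖T g‖ = r := by
        rw [hTg, norm_smul_c0, hunorm]
        simp [Complex.norm_real, Real.norm_eq_abs, abs_of_pos hr]
      have hgnorm : ‖g‖ = r := by rw [← hnorm g hgA, hTgnorm]
      have hgx₀ : ‖g x₀‖ = r := by rw [hgmax, hgnorm]
      have hhx₀ : ‖h x₀‖ = t := by
        rw [hhdef, ZeroAtInftyContinuousMap.smul_apply, hk1, smul_eq_mul, mul_one,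
          Complex.norm_real, Real.norm_eq_abs, abs_of_pos ht]
      have e1 : supPhi φ (fun x => h x) (fun x => g x) = φ ((t : ℂ)) ((r : ℂ)) :=
        supPhi_eq hinc x₀ (fun x => (abs_apply_le_norm h x).trans_eq hhnorm)
          (fun x => (abs_apply_le_norm g x).trans_eq hgnorm) hhx₀ hgx₀
      have e2 : supPhi φ (fun x => g x) (fun x => h x) = φ ((r : ℂ)) ((t : ℂ)) :=
        supPhi_eq hinc x₀ (fun x => (abs_apply_le_norm g x).trans_eq hgnorm)
          (fun x => (abs_apply_le_norm h x).trans_eq hhnorm) hgx₀ hhx₀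
      have hFa : ∀ y, ‖T h y‖ ≤ t :=
        fun y => (abs_apply_le_norm (T h) y).trans_eq hThnorm
      have hGb : ∀ y, ‖T g y‖ ≤ r :=
        fun y => (abs_apply_le_norm (T g) y).trans_eq hTgnorm
      have hFV : ∀ y ∈ V, ‖T h y‖ ≤ t - δ := fun y hy => le_of_lt hy
      have hGV : ∀ y ∉ V, ‖T g y‖ ≤ r / 2 := by
        intro y hy
        rw [hTg, ZeroAtInftyContinuousMap.smul_apply, smul_eq_mul, norm_mul,
          Complex.norm_real, Real.norm_eq_abs, abs_of_pos hr]
        have h1 := (husm y hy).le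
        nlinarith [norm_nonneg (u y)]
      obtain ⟨l1, l2⟩ := supPhi_lt hinc (F := fun y => T h y) (G := fun y => T g y)
        V ht hr hδ hδt hFa hGb hFV hGV
      have hE := hT h hhA g hgA
      have hcontra : rhoGen c φ (fun y => T h y) (fun y => T g y) <
          rhoGen c φ (fun x => h x) (fun x => g x) := by
        cases c with
        | false =>
          show max (supPhi φ (fun y => T h y) (fun y => T g y))
              (supPhi φ (fun y => T g y) (fun y => T h y)) <
            max (supPhi φ (fun x => h x) (fun x => g x))
              (supPhi φ (fun x => g x) (fun x => h x))
          rw [e1, e2]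
          exact max_lt_max l1 l2
        | true =>
          show supPhi φ (fun y => T h y) (fun y => T g y) +
              supPhi φ (fun y => T g y) (fun y => T h y) <
            supPhi φ (fun x => h x) (fun x => g x) +
              supPhi φ (fun x => g x) (fun x => h x)
          rw [e1, e2]
          exact add_lt_add l1 l2
      rw [hE] at hcontra
      exact lt_irrefl _ hcontra
    · -- backward direction
      intro HJ
      rw [Set.mem_iInter₂] at HJ
      rw [Set.mem_iInter₂]
      rintro f ⟨hfA, hTfV⟩
      rw [Set.mem_smul_set] at hTfV
      obtain ⟨v, hv, hTf⟩ := hTfV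
      obtain ⟨hvB, hvy₀, hvnorm⟩ := hv
      have hTfnorm : ‖T f‖ = r := by
        rw [← hTf, norm_smul_c0, hvnorm]
        simp [Complex.norm_real, Real.norm_eq_abs, abs_of_pos hr]
      have hfnorm : ‖f‖ = r := by rw [← hnorm f hfA, hTfnorm]
      show ‖f x₀‖ = ‖f‖
      rw [hfnorm]
      by_contra hne
      have hlt : ‖f x₀‖ < r :=
        lt_of_le_of_ne (hfnorm ▸ abs_apply_le_norm f x₀) hne
      set δ := (r - ‖f x₀‖) / 2 with hδdef
      have hδ : 0 < δ := by rw [hδdef]; linarith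
      have hδr : δ ≤ r := by
        have := norm_nonneg (f x₀)
        rw [hδdef]; linarith
      set V := {x | ‖f x‖ < r - δ} with hVdef
      have hVo : IsOpen V :=
        isOpen_lt (continuous_norm.comp (map_continuous f)) continuous_const
      have hx₀V : x₀ ∈ V := by
        rw [hVdef]
        simp only [Set.mem_setOf_eq]
        rw [hδdef]; linarith
      obtain ⟨k, hkA, hkx₀, hknorm, hksm⟩ :=
        (hbd𝒜 x₀).mpr hx₀ (1/2) (by norm_num) V (hVo.mem_nhds hx₀V)
      set h : C₀(X, ℂ) := (↑t : ℂ) • k with hhdef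
      have hhA : h ∈ A := hAsmul t ht.le k hkA
      have hhnorm : ‖h‖ = t := by
        rw [hhdef, norm_smul_c0, hknorm]
        simp [Complex.norm_real, Real.norm_eq_abs, abs_of_pos ht]
      have hhmem : h ∈ ((t : ℂ)) • Vset A x₀ :=
        Set.mem_smul_set.mpr ⟨k, ⟨hkA, hkx₀, hknorm⟩, rfl⟩
      have hThy₀ : ‖T h y₀‖ = t := by
        have := HJ h hhmem
        have h2 : ‖T h y₀‖ = ‖T h‖ := this
        rw [h2, hnorm h hhA, hhnorm]
      have hTfy₀ : ‖T f y₀‖ = r := by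
        rw [← hTf, ZeroAtInftyContinuousMap.smul_apply, hvy₀, smul_eq_mul, mul_one,
          Complex.norm_real, Real.norm_eq_abs, abs_of_pos hr]
      have e1 : supPhi φ (fun y => T f y) (fun y => T h y) = φ ((r : ℂ)) ((t : ℂ)) :=
        supPhi_eq hinc y₀ (fun y => (abs_apply_le_norm (T f) y).trans_eq hTfnorm)
          (fun y => (abs_apply_le_norm (T h) y).trans_eq (by rw [hnorm h hhA, hhnorm]))
          hTfy₀ hThy₀
      have e2 : supPhi φ (fun y => T h y) (fun y => T f y) = φ ((t : ℂ)) ((r : ℂ)) :=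
        supPhi_eq hinc y₀ (fun y => (abs_apply_le_norm (T h) y).trans_eq (by rw [hnorm h hhA, hhnorm]))
          (fun y => (abs_apply_le_norm (T f) y).trans_eq hTfnorm) hThy₀ hTfy₀
      have hFa : ∀ x, ‖f x‖ ≤ r :=
        fun x => (abs_apply_le_norm f x).trans_eq hfnorm
      have hGb : ∀ x, ‖h x‖ ≤ t :=
        fun x => (abs_apply_le_norm h x).trans_eq hhnorm
      have hFV : ∀ x ∈ V, ‖f x‖ ≤ r - δ := fun x hx => le_of_lt hx
      have hGV : ∀ x ∉ V, ‖h x‖ ≤ t / 2 := by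
        intro x hx
        rw [hhdef, ZeroAtInftyContinuousMap.smul_apply, smul_eq_mul, norm_mul,
          Complex.norm_real, Real.norm_eq_abs, abs_of_pos ht]
        have h1 := (hksm x hx).le
        nlinarith [norm_nonneg (k x)]
      obtain ⟨l1, l2⟩ := supPhi_lt hinc (F := fun x => f x) (G := fun x => h x)
        V hr ht hδ hδr hFa hGb hFV hGV
      have hE := hT f hfA h hhA
      have hcontra : rhoGen c φ (fun x => f x) (fun x => h x) <
          rhoGen c φ (fun y => T f y) (fun y => T h y) := by
        cases c with
        | false =>
          show max (supPhi φ (fun x => f x) (fun x => h x))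
              (supPhi φ (fun x => h x) (fun x => f x)) <
            max (supPhi φ (fun y => T f y) (fun y => T h y))
              (supPhi φ (fun y => T h y) (fun y => T f y))
          rw [e1, e2]
          exact max_lt_max l1 l2
        | true =>
          show supPhi φ (fun x => f x) (fun x => h x) +
              supPhi φ (fun x => h x) (fun x => f x) <
            supPhi φ (fun y => T f y) (fun y => T h y) +
              supPhi φ (fun y => T h y) (fun y => T f y)
          rw [e1, e2]
          exact add_lt_add l1 l2
      rw [hE] at hcontra
      exact lt_irrefl _ hcontra
  constructor
  · have h1 := key 1 s one_pos hs
    rw [Complex.ofReal_one] at h1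
    exact h1
  · have h2 := key s 1 hs one_pos
    rw [Complex.ofReal_one] at h2
    exact h2.symm
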